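/- For all n ≥ 1, ∑_{d|n} (μ(d) log d)/d = (φ(n)/n) · ∑_{p|n} (log p)/(1 - p), where the right-hand sum is over the distinct prime divisors of n. -/
import Mathlib

open Finset ArithmeticFunction

lemma aux_M (P : Finset ℕ) (hP : ∀ p ∈ P, (p : ℝ) ≠ 0) :
    ∑ S ∈ P.powerset, (-1 : ℝ) ^ S.card / ∏ p ∈ S, (p : ℝ) =
      ∏ p ∈ P, (1 - 1 / (p : ℝ)) := by
  have : ∀ p ∈ P, (1 - 1 / (p : ℝ)) = (-(1 / (p : ℝ))) + 1 := by intro p _; ring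
  rw [Finset.prod_congr rfl this, Finset.prod_add]
  refine Finset.sum_congr rfl fun S hS => ?_
  rw [Finset.prod_const_one, mul_one,
    show (∏ i ∈ S, -(1 / (i : ℝ))) = (-1) ^ S.card * ∏ i ∈ S, (1 / (i : ℝ)) by
      rw [← Finset.prod_const (-1 : ℝ), ← Finset.prod_mul_distrib]
      exact Finset.prod_congr rfl fun i _ => by ring]
  simp [one_div, Finset.prod_inv_distrib, div_eq_mul_inv]

lemma aux_L (P : Finset ℕ) (hP : ∀ p ∈ P, 2 ≤ p) :
    ∑ S ∈ P.powerset,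
        (-1 : ℝ) ^ S.card * (∑ p ∈ S, Real.log p) / ∏ p ∈ S, (p : ℝ) =
      (∏ p ∈ P, (1 - 1 / (p : ℝ))) * ∑ p ∈ P, Real.log p / (1 - (p : ℝ)) := by
  classical
  induction P using Finset.induction_on with
  | empty => simp
  | @insert a P ha ih =>
    have ha2 : 2 ≤ a := hP a (Finset.mem_insert_self a P)
    have hP' : ∀ p ∈ P, 2 ≤ p := fun p hp => hP p (Finset.mem_insert_of_mem hp)
    have haR : (2 : ℝ) ≤ (a : ℝ) := by exact_mod_cast ha2
    have haR0 : (a : ℝ) ≠ 0 := by linarith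
    have haR1 : (1 : ℝ) - (a : ℝ) ≠ 0 := by intro h; nlinarith
    have hq : ∀ S ∈ P.powerset, (∏ p ∈ S, (p : ℝ)) ≠ 0 := by
      intro S hS
      refine Finset.prod_ne_zero_iff.mpr fun p hp => ?_
      have := hP' p (Finset.mem_powerset.mp hS hp)
      positivity
    rw [Finset.sum_powerset_insert ha, ih hP']
    have hstep : ∑ S ∈ P.powerset,
        (-1 : ℝ) ^ (insert a S).card * (∑ p ∈ insert a S, Real.log p) /
          ∏ p ∈ insert a S, (p : ℝ) =
        -(Real.log a / a) * ∑ S ∈ P.powerset, (-1 : ℝ) ^ S.card / ∏ p ∈ S, (p : ℝ)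
        - (1 / a) * ∑ S ∈ P.powerset,
            (-1 : ℝ) ^ S.card * (∑ p ∈ S, Real.log p) / ∏ p ∈ S, (p : ℝ) := by
      rw [Finset.mul_sum, Finset.mul_sum, ← Finset.sum_sub_distrib]
      refine Finset.sum_congr rfl fun S hS => ?_
      have haS : a ∉ S := fun h => ha (Finset.mem_powerset.mp hS h)
      rw [Finset.card_insert_of_notMem haS, Finset.sum_insert haS,
        Finset.prod_insert haS]
      have hq' := hq S hS
      field_simp
      ring
    rw [hstep, aux_M P (fun p hp => by
      have := hP' p hp; positivity), Finset.prod_insert ha, Finset.sum_insert ha,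
      ih hP']
    have key : (1 - 1 / (a : ℝ)) / (1 - (a : ℝ)) = -(1 / a) := by
      field_simp
      ring
    field_simp
    ring

/-- For all `n ≥ 1`,
`∑_{d|n} μ(d) log(d)/d = (φ(n)/n) · ∑_{p|n} log(p)/(1 - p)`. -/
theorem sum_moebius_log_div (n : ℕ) (hn : 1 ≤ n) :
    (∑ d ∈ n.divisors, (ArithmeticFunction.moebius d : ℝ) * Real.log d / d) =
      ((Nat.totient n : ℝ) / n) * ∑ p ∈ n.primeFactors, Real.log p / (1 - (p : ℝ)) := by
  classical
  have hn0 : n ≠ 0 := by omega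
  -- totient product formula over ℝ
  have htot : ((Nat.totient n : ℝ) / n) = ∏ p ∈ n.primeFactors, (1 - 1 / (p : ℝ)) := by
    have h := Nat.totient_eq_mul_prod_factors n
    have h' : ((Nat.totient n : ℚ) : ℝ) =
        ((n * ∏ p ∈ n.primeFactors, (1 - (p : ℚ)⁻¹) : ℚ) : ℝ) :=
      congrArg (fun q : ℚ => (q : ℝ)) h
    push_cast at h'
    have hnR : (n : ℝ) ≠ 0 := by exact_mod_cast hn0
    rw [div_eq_iff hnR]
    rw [h']
    rw [mul_comm]
    congr 1
    refine Finset.prod_congr rfl fun p hp => ?_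
    rw [one_div]
  -- restrict to squarefree divisors
  have h1 : (∑ d ∈ n.divisors, (ArithmeticFunction.moebius d : ℝ) * Real.log d / d) =
      ∑ d ∈ n.divisors with Squarefree d,
        (ArithmeticFunction.moebius d : ℝ) * Real.log d / d := by
    refine (Finset.sum_filter_of_ne fun d _ hne => ?_).symm
    by_contra hsq
    rw [moebius_eq_zero_of_not_squarefree hsq] at hne
    simp at hne
  rw [h1, Nat.sum_divisors_filter_squarefree hn0]
  have hfac : (UniqueFactorizationMonoid.normalizedFactors n).toFinset = n.primeFactors := by
    rw [Nat.factors_eq]; rfl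
  rw [hfac, htot, ← aux_L n.primeFactors (fun p hp =>
    (Nat.prime_of_mem_primeFactors hp).two_le)]
  refine Finset.sum_congr rfl fun t ht => ?_
  have hsub : t ⊆ n.primeFactors := Finset.mem_powerset.mp ht
  have hprime : ∀ p ∈ t, p.Prime := fun p hp => Nat.prime_of_mem_primeFactors (hsub hp)
  have hprodval : (t.val.prod : ℕ) = ∏ p ∈ t, p := by
    rw [Finset.prod_val]; simp
  rw [hprodval]
  have hmu : (ArithmeticFunction.moebius (∏ p ∈ t, p) : ℝ) = (-1 : ℝ) ^ t.card := by
    rw [ArithmeticFunction.isMultiplicative_moebius.map_prod_of_subset_primeFactors n t hsub]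
    push_cast
    rw [Finset.prod_congr rfl fun p hp => by
      rw [moebius_apply_prime (hprime p hp)]]
    push_cast
    simp
  have hlog : Real.log (∏ p ∈ t, p : ℕ) = ∑ p ∈ t, Real.log p := by
    push_cast
    rw [Real.log_prod]
    intro p hp
    exact_mod_cast (hprime p hp).ne_zero
  have hcast : ((∏ p ∈ t, p : ℕ) : ℝ) = ∏ p ∈ t, (p : ℝ) := by push_cast; rfl
  rw [hmu, hlog, hcast]
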